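/- The image under Patience Sorting of the set of permutations of {1,…,n} avoiding the classical pattern 3-1-2 is exactly the set of non-crossing pile configurations, i.e., those pile configurations in which every pile is an interval of consecutive integers (so that for the composition (γ_1,…,γ_k) of n the piles are {1,…,γ_1}, {γ_1+1,…,γ_1+γ_2}, …, {n−γ_k+1,…,n}); in particular there are exactly 2^{n−1} such pile configurations. -/

import Mathlib

/-- One step of Patience Sorting: place card `c` on the leftmost pile whose top
(head) is larger than `c`, or start a new pile on the right.  Piles are stored
top-first, so each pile is an increasing list whose head is the top (smallest) card. -/
def PSinsert (c : ℕ) : List (List ℕ) → List (List ℕ)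
  | [] => [[c]]
  | [] :: ps => [] :: PSinsert c ps
  | (x :: p) :: ps =>
      if c < x then (c :: x :: p) :: ps else (x :: p) :: PSinsert c ps

/-- The pile configuration `R(w)` produced by Patience Sorting applied to the word `w`. -/
def PSpiles (w : List ℕ) : List (List ℕ) :=
  w.foldl (fun ps c => PSinsert c ps) []

/-- The one-line word (with values `1,…,n`) of a permutation of `Fin n`. -/
def permWord {n : ℕ} (σ : Equiv.Perm (Fin n)) : List ℕ :=
  List.ofFn fun i => (σ i : ℕ) + 1

open List

/-- a 312 pattern in a word. -/
def Pat312 (w : List ℕ) : Prop := ∃ a b c : ℕ, b < c ∧ c < a ∧ [a, b, c] <+ w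

open List

lemma pat312_mono {w w' : List ℕ} (h : w <+ w') : Pat312 w → Pat312 w' := by
  rintro ⟨a, b, c, h1, h2, h3⟩
  exact ⟨a, b, c, h1, h2, h3.trans h⟩

lemma pair_sublist {p : List ℕ} (hp : p.Pairwise (· < ·)) {a c : ℕ}
    (ha : a ∈ p) (hc : c ∈ p) (h : a < c) : [a, c] <+ p := by
  induction p with
  | nil => simp at ha
  | cons x t ih =>
    rcases List.pairwise_cons.1 hp with ⟨hx, ht⟩
    rcases List.mem_cons.1 ha with ha1 | ha1
    · subst ha1
      rcases List.mem_cons.1 hc with hc1 | hc1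
      · omega
      · exact (List.singleton_sublist.2 hc1).cons₂ a
    · rcases List.mem_cons.1 hc with hc1 | hc1
      · exact absurd (hx a ha1) (by omega)
      · exact (ih ht ha1 hc1).cons x

/-- Case analysis of one insertion step. -/
lemma PSinsert_cases (c : ℕ) (ps : List (List ℕ)) (hne : ∀ p ∈ ps, p ≠ []) :
    (∃ ps₁ p ps₂, ps = ps₁ ++ p :: ps₂ ∧ PSinsert c ps = ps₁ ++ (c :: p) :: ps₂ ∧
      (∀ q ∈ ps₁, q.headI < c ∨ q.headI = c) ∧ c < p.headI) ∨
    (PSinsert c ps = ps ++ [[c]] ∧ ∀ q ∈ ps, q.headI < c ∨ q.headI = c) := by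
  induction ps with
  | nil => right; exact ⟨rfl, by simp⟩
  | cons p ps ih =>
    match p, hne p (by simp) with
    | x :: p, _ =>
      by_cases hc : c < x
      · left
        exact ⟨[], x :: p, ps, rfl, by simp [PSinsert, hc], by simp, hc⟩
      · have hne' : ∀ q ∈ ps, q ≠ [] := fun q hq => hne q (by simp [hq])
        rcases ih hne' with ⟨ps₁, q, ps₂, h1, h2, h3, h4⟩ | ⟨h1, h2⟩
        · left
          refine ⟨(x :: p) :: ps₁, q, ps₂, by simp [h1], ?_, ?_, h4⟩
          · simp [PSinsert, hc, h2]
          · intro r hr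
            rcases List.mem_cons.1 hr with hr | hr
            · subst hr; simp; omega
            · exact h3 r hr
        · right
          constructor
          · simp [PSinsert, hc, h1]
          · intro r hr
            rcases List.mem_cons.1 hr with hr | hr
            · subst hr; simp; omega
            · exact h2 r hr

lemma headI_mem {p : List ℕ} (h : p ≠ []) : p.headI ∈ p := by
  cases p with
  | nil => exact absurd rfl h
  | cons x t => simp [List.headI]

lemma headI_le {p : List ℕ} (hp : p.Pairwise (· < ·)) {x : ℕ} (hx : x ∈ p) :
    p.headI ≤ x := by
  cases p with
  | nil => simp at hx
  | cons y t =>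
    rcases List.mem_cons.1 hx with h | h
    · simp [List.headI, h]
    · exact le_of_lt ((List.pairwise_cons.1 hp).1 x h)

/-- The invariant maintained by Patience Sorting. -/
structure PSInv (w : List ℕ) (ps : List (List ℕ)) : Prop where
  perm : ps.flatten.Perm w
  ne : ∀ p ∈ ps, p ≠ []
  sorted : ∀ p ∈ ps, p.Pairwise (· < ·)
  heads : (ps.map List.headI).Chain' (· < ·)
  sub : ∀ p ∈ ps, p.reverse <+ w
  intv : ¬ Pat312 w → ∀ p ∈ ps, ∀ a ∈ p, ∀ c ∈ p, ∀ x ∈ w, a < x → x < c → x ∈ p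

lemma inv_mem_w {w ps} (hI : PSInv w ps) {x : ℕ} :
    x ∈ w ↔ ∃ q ∈ ps, x ∈ q := by
  rw [← hI.perm.mem_iff, List.mem_flatten]

/-- the key pattern-producing configuration: `a, c` in one pile with `a < b < c`,
and then `b` arrives: gives a 312 pattern. -/
lemma pat_of_pile {w : List ℕ} {ps : List (List ℕ)} (hI : PSInv w ps)
    {p : List ℕ} (hp : p ∈ ps) {a b c : ℕ} (ha : a ∈ p) (hc : c ∈ p)
    (h1 : a < b) (h2 : b < c) : Pat312 (w ++ [b]) := by
  have hs : [a, c] <+ p := pair_sublist (hI.sorted p hp) ha hc (h1.trans h2)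
  have hs' : [c, a] <+ p.reverse := by
    have := hs.reverse
    simpa using this
  have : [c, a] <+ w := hs'.trans (hI.sub p hp)
  exact ⟨c, a, b, h1, h2, by
    have := this.append (List.Sublist.refl [b])
    simpa using this⟩

lemma inv_step {w : List ℕ} {ps : List (List ℕ)} (hI : PSInv w ps) {b : ℕ}
    (hb : b ∉ w) : PSInv (w ++ [b]) (PSinsert b ps) := by
  have hwsub : w <+ w ++ [b] := List.sublist_append_left w [b]
  have hmem : ∀ q ∈ ps, q.headI < b ∨ q.headI = b → q.headI < b := by
    intro q hq h
    rcases h with h | h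
    · exact h
    · exact absurd ((inv_mem_w hI).2 ⟨q, hq, h ▸ headI_mem (hI.ne q hq)⟩) (h ▸ hb)
  rcases PSinsert_cases b ps hI.ne with ⟨ps₁, p, ps₂, hps, heq, h₁, h₂⟩ | ⟨heq, h₁⟩
  · -- b lands on pile p
    have hpmem : p ∈ ps := by rw [hps]; simp
    have h₁' : ∀ q ∈ ps₁, q.headI < b := fun q hq =>
      hmem q (by rw [hps]; simp [hq]) (h₁ q hq)
    have hpne := hI.ne p hpmem
    have hq₁ : ∀ q ∈ ps₁, q ∈ ps := fun q hq => by rw [hps]; simp [hq]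
    have hq₂ : ∀ q ∈ ps₂, q ∈ ps := fun q hq => by rw [hps]; simp [hq]
    rw [heq]
    constructor
    · -- perm
      have e1 : (ps₁ ++ (b :: p) :: ps₂).flatten
          = ps₁.flatten ++ b :: (p ++ ps₂.flatten) := by
        simp [List.flatten_append]
      have e2 : ps.flatten = ps₁.flatten ++ (p ++ ps₂.flatten) := by
        rw [hps]; simp [List.flatten_append]
      rw [e1]
      calc ps₁.flatten ++ b :: (p ++ ps₂.flatten)
          ~ b :: (ps₁.flatten ++ (p ++ ps₂.flatten)) := List.perm_middle
        _ ~ b :: w := (e2 ▸ hI.perm).cons b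
        _ ~ w ++ [b] := (List.perm_append_singleton b w).symm
    · intro q hq
      rcases List.mem_append.1 hq with h | h
      · exact hI.ne q (hq₁ q h)
      · rcases List.mem_cons.1 h with h | h
        · simp [h]
        · exact hI.ne q (hq₂ q h)
    · intro q hq
      rcases List.mem_append.1 hq with h | h
      · exact hI.sorted q (hq₁ q h)
      · rcases List.mem_cons.1 h with h | h
        · subst h
          refine List.pairwise_cons.2 ⟨fun y hy => lt_of_lt_of_le h₂ ?_, hI.sorted p hpmem⟩
          exact headI_le (hI.sorted p hpmem) hy
        · exact hI.sorted q (hq₂ q h)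
    · -- heads
      have hold := hI.heads
      rw [hps] at hold
      rw [List.map_append, List.map_cons] at hold ⊢
      rcases List.isChain_append.1 hold with ⟨c1, c2, c3⟩
      refine List.isChain_append.2 ⟨c1, ?_, ?_⟩
      · refine List.isChain_cons.2 ⟨?_, (List.isChain_cons.1 c2).2⟩
        intro y hy
        have := (List.isChain_cons.1 c2).1 y hy
        calc (b :: p).headI = b := by simp [List.headI]
          _ < p.headI := h₂
          _ < y := this
      · intro x hx y hy
        have hx' : x ∈ List.map List.headI ps₁ := List.mem_of_mem_getLast? hx
        rcases List.mem_map.1 hx' with ⟨q, hq, rfl⟩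
        have hyb : b = y := by simpa [List.headI] using hy
        subst hyb
        exact h₁' q hq
    · intro q hq
      rcases List.mem_append.1 hq with h | h
      · exact (hI.sub q (hq₁ q h)).trans hwsub
      · rcases List.mem_cons.1 h with h | h
        · subst h
          have : (b :: p).reverse = p.reverse ++ [b] := by simp
          rw [this]
          exact (hI.sub p hpmem).append (List.Sublist.refl [b])
        · exact (hI.sub q (hq₂ q h)).trans hwsub
    · -- intervals
      intro hnp q hq a ha c hc x hx hax hxc
      have hnpw : ¬ Pat312 w := fun h => hnp (pat312_mono hwsub h)
      have hgen : ∀ q' ∈ ps, a ∈ q' → c ∈ q' → x ∈ q' := by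
        intro q' hq' ha' hc'
        rcases List.mem_append.1 hx with hxw | hxb
        · exact hI.intv hnpw q' hq' a ha' c hc' x hxw hax hxc
        · have : x = b := by simpa using hxb
          subst this
          exact absurd (pat_of_pile hI hq' ha' hc' hax hxc) hnp
      rcases List.mem_append.1 hq with h | h
      · exact hgen q (hq₁ q h) ha hc
      · rcases List.mem_cons.1 h with h | h
        · -- q = b :: p
          subst h
          have hcb : c ≠ b := by
            intro hcb
            subst hcb
            rcases List.mem_cons.1 ha with h' | h'
            · omega
            · have := headI_le (hI.sorted p hpmem) h'
              omega
          have hcp : c ∈ p := (List.mem_cons.1 hc).resolve_left hcb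
          have hxb : x ≠ b := by
            intro hxb
            subst hxb
            rcases List.mem_cons.1 ha with h' | h'
            · omega
            · have := headI_le (hI.sorted p hpmem) h'
              omega
          have hxw : x ∈ w := by
            rcases List.mem_append.1 hx with h' | h'
            · exact h'
            · exact absurd (by simpa using h') hxb
          rcases List.mem_cons.1 ha with hab | hap
          · -- a = b
            subst hab
            by_cases hxh : p.headI ≤ x
            · rcases eq_or_lt_of_le hxh with h' | h'
              · exact List.mem_cons_of_mem a (h' ▸ headI_mem hpne)
              · exact List.mem_cons_of_mem a
                  (hI.intv hnpw p hpmem p.headI (headI_mem hpne) c hcp x hxw h' hxc)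
            · push_neg at hxh
              exfalso
              obtain ⟨r, hr, hxr⟩ := (inv_mem_w hI).1 hxw
              rw [hps] at hr
              rcases List.mem_append.1 hr with hr1 | hr1
              · -- r ∈ ps₁ : extract the 312 pattern  x, headI r, b
                have ht : r.headI < a := h₁' r hr1
                have htx : r.headI ≤ x := headI_le (hI.sorted r (hq₁ r hr1)) hxr
                have htx' : r.headI < x := by omega
                have hsub : [r.headI, x] <+ r :=
                  pair_sublist (hI.sorted r (hq₁ r hr1)) (headI_mem (hI.ne r (hq₁ r hr1))) hxr htx'
                have hsub' : [x, r.headI] <+ w := by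
                  have := hsub.reverse
                  simp at this
                  exact this.trans (hI.sub r (hq₁ r hr1))
                refine hnp ⟨x, r.headI, a, ht, hax, ?_⟩
                have := hsub'.append (List.Sublist.refl [a])
                simpa using this
              · rcases List.mem_cons.1 hr1 with hr2 | hr2
                · exact absurd (headI_le (hI.sorted p hpmem) (hr2 ▸ hxr)) (by omega)
                · -- r ∈ ps₂ : contradicts heads increasing
                  have hpair : List.Pairwise (· < ·) (ps.map List.headI) :=
                    List.isChain_iff_pairwise.1 hI.heads
                  rw [hps, List.map_append, List.map_cons] at hpair
                  have : p.headI < r.headI := by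
                    rcases List.pairwise_append.1 hpair with ⟨-, hc2, -⟩
                    exact (List.pairwise_cons.1 hc2).1 r.headI
                      (List.mem_map.2 ⟨r, hr2, rfl⟩)
                  have := headI_le (hI.sorted r (hq₂ r hr2)) hxr
                  omega
          · exact List.mem_cons_of_mem b (hI.intv hnpw p hpmem a hap c hcp x hxw hax hxc)
        · exact hgen q (hq₂ q h) ha hc
  · -- b starts a new pile
    have h₁' : ∀ q ∈ ps, q.headI < b := fun q hq => hmem q hq (h₁ q hq)
    rw [heq]
    constructor
    · rw [List.flatten_append]
      simpa using hI.perm.append (List.Perm.refl [b])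
    · intro q hq
      rcases List.mem_append.1 hq with h | h
      · exact hI.ne q h
      · simp at h; simp [h]
    · intro q hq
      rcases List.mem_append.1 hq with h | h
      · exact hI.sorted q h
      · simp at h; simp [h]
    · rw [List.map_append]
      refine List.isChain_append.2 ⟨hI.heads, by simp, ?_⟩
      intro x hx y hy
      have hx' : x ∈ List.map List.headI ps := List.mem_of_mem_getLast? hx
      rcases List.mem_map.1 hx' with ⟨q, hq, rfl⟩
      have hyb : b = y := by simpa [List.headI] using hy
      subst hyb
      exact h₁' q hq
    · intro q hq
      rcases List.mem_append.1 hq with h | h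
      · exact (hI.sub q h).trans hwsub
      · simp at h
        subst h
        simpa using List.sublist_append_right w [b]
    · intro hnp q hq a ha c hc x hx hax hxc
      have hnpw : ¬ Pat312 w := fun h => hnp (pat312_mono hwsub h)
      rcases List.mem_append.1 hq with h | h
      · rcases List.mem_append.1 hx with hxw | hxb
        · exact hI.intv hnpw q h a ha c hc x hxw hax hxc
        · have : x = b := by simpa using hxb
          subst this
          exact absurd (pat_of_pile hI h ha hc hax hxc) hnp
      · simp at h
        subst h
        simp at ha hc
        omega

lemma inv_psPiles (w : List ℕ) (hw : w.Nodup) : PSInv w (PSpiles w) := by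
  induction w using List.reverseRecOn with
  | nil =>
    exact ⟨by simp [PSpiles], by simp [PSpiles], by simp [PSpiles],
      by simp [PSpiles]; exact List.IsChain.nil, by simp [PSpiles], by simp [PSpiles]⟩
  | append_singleton w b ih =>
    have hw' : w.Nodup := hw.of_append_left
    have hb : b ∉ w := by
      have := List.disjoint_of_nodup_append hw
      intro h
      exact this h (by simp)
    have : PSpiles (w ++ [b]) = PSinsert b (PSpiles w) := by
      simp [PSpiles, List.foldl_append]
    rw [this]
    exact inv_step (ih hw') hb

def intervalPiles : ℕ → List ℕ → List (List ℕ)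
  | _, [] => []
  | a, m :: ms => List.range' a m :: intervalPiles (a + m) ms

def intervalWord : ℕ → List ℕ → List ℕ
  | _, [] => []
  | a, m :: ms => (List.range' a m).reverse ++ intervalWord (a + m) ms

lemma intervalWord_length : ∀ (ms : List ℕ) (a : ℕ),
    (intervalWord a ms).length = ms.sum := by
  intro ms
  induction ms with
  | nil => intro a; simp [intervalWord]
  | cons m ms ih => intro a; simp [intervalWord, ih]

lemma intervalWord_perm : ∀ (ms : List ℕ) (a : ℕ),
    (intervalWord a ms).Perm (intervalPiles a ms).flatten := by
  intro ms
  induction ms with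
  | nil => intro a; simp [intervalWord, intervalPiles]
  | cons m ms ih =>
    intro a
    simp only [intervalWord, intervalPiles, List.flatten_cons]
    exact ((List.reverse_perm _).append (ih (a + m)))

lemma intervalWord_mem : ∀ (ms : List ℕ) (a x : ℕ),
    x ∈ intervalWord a ms ↔ a ≤ x ∧ x < a + ms.sum := by
  intro ms
  induction ms with
  | nil => intro a x; simp [intervalWord]
  | cons m ms ih =>
    intro a x
    simp only [intervalWord, List.mem_append, List.mem_reverse, List.mem_range'_1,
      ih (a + m), List.sum_cons]
    omega

lemma intervalPiles_map_length : ∀ (ms : List ℕ) (a : ℕ),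
    (intervalPiles a ms).map List.length = ms := by
  intro ms
  induction ms with
  | nil => intro a; simp [intervalPiles]
  | cons m ms ih => intro a; simp [intervalPiles, ih]

lemma PSinsert_new (c : ℕ) : ∀ ps : List (List ℕ), (∀ p ∈ ps, p ≠ []) →
    (∀ p ∈ ps, ¬ c < p.headI) → PSinsert c ps = ps ++ [[c]] := by
  intro ps
  induction ps with
  | nil => intro _ _; rfl
  | cons p ps ih =>
    intro h1 h2
    match p, h1 p (by simp) with
    | x :: t, _ =>
      have hx : ¬ c < x := by simpa [List.headI] using h2 (x :: t) (by simp)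
      simp only [PSinsert, hx, if_false]
      rw [ih (fun q hq => h1 q (by simp [hq])) (fun q hq => h2 q (by simp [hq]))]
      simp

lemma PSinsert_last (c : ℕ) (q : List ℕ) (hq : q ≠ []) (hcq : c < q.headI) :
    ∀ ps : List (List ℕ), (∀ p ∈ ps, p ≠ []) → (∀ p ∈ ps, ¬ c < p.headI) →
    PSinsert c (ps ++ [q]) = ps ++ [c :: q] := by
  intro ps
  induction ps with
  | nil =>
    intro _ _
    match q, hq with
    | x :: t, _ =>
      have : c < x := by simpa [List.headI] using hcq
      simp [PSinsert, this]
  | cons p ps ih =>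
    intro h1 h2
    match p, h1 p (by simp) with
    | x :: t, _ =>
      have hx : ¬ c < x := by simpa [List.headI] using h2 (x :: t) (by simp)
      simp only [List.cons_append, PSinsert, hx, if_false]
      exact congrArg (List.cons (x :: t)) (ih (fun r hr => h1 r (by simp [hr])) (fun r hr => h2 r (by simp [hr])))

lemma fold_run : ∀ (m a : ℕ) (ps : List (List ℕ)), 0 < m →
    (∀ p ∈ ps, p ≠ [] ∧ p.headI < a) →
    List.foldl (fun ps c => PSinsert c ps) ps (List.range' a m).reverse
      = ps ++ [List.range' a m] := by
  intro m
  induction m with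
  | zero => omega
  | succ k ih =>
    intro a ps _ h
    rw [List.range'_succ]
    have hrev : (a :: List.range' (a + 1) k).reverse
        = (List.range' (a + 1) k).reverse ++ [a] := by simp
    rw [hrev, List.foldl_append]
    rcases Nat.eq_zero_or_pos k with hk | hk
    · subst hk
      simp only [List.range', List.reverse_nil, List.foldl_nil, List.foldl_cons]
      rw [PSinsert_new a ps (fun p hp => (h p hp).1)
        (fun p hp => by have := (h p hp).2; omega)]
    · rw [ih (a + 1) ps hk (fun p hp => ⟨(h p hp).1, by have := (h p hp).2; omega⟩)]
      simp only [List.foldl_cons, List.foldl_nil]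
      refine PSinsert_last a (List.range' (a + 1) k) ?_ ?_ ps
        (fun p hp => (h p hp).1) (fun p hp => by have := (h p hp).2; omega)
      · have : (List.range' (a + 1) k).length = k := List.length_range'
        intro hnil
        rw [hnil] at this
        simp at this
        omega
      · match k, hk with
        | k + 1, _ =>
          rw [List.range'_succ]
          simp [List.headI]

lemma fold_word : ∀ (ms : List ℕ) (a : ℕ) (ps : List (List ℕ)),
    (∀ p ∈ ps, p ≠ [] ∧ p.headI < a) → (∀ m ∈ ms, 0 < m) →
    List.foldl (fun ps c => PSinsert c ps) ps (intervalWord a ms)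
      = ps ++ intervalPiles a ms := by
  intro ms
  induction ms with
  | nil => intro a ps _ _; simp [intervalWord, intervalPiles]
  | cons m ms ih =>
    intro a ps h hm
    have hm0 : 0 < m := hm m (by simp)
    simp only [intervalWord, List.foldl_append]
    rw [fold_run m a ps hm0 h]
    rw [ih (a + m) (ps ++ [List.range' a m]) ?_ (fun r hr => hm r (by simp [hr]))]
    · simp [intervalPiles]
    · intro p hp
      rcases List.mem_append.1 hp with h' | h'
      · exact ⟨(h p h').1, by have := (h p h').2; omega⟩
      · simp at h'
        subst h'
        constructor
        · intro hnil
          have : (List.range' a m).length = m := List.length_range'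
          rw [hnil] at this; simp at this; omega
        · match m, hm0 with
          | m + 1, _ => rw [List.range'_succ]; simp [List.headI]

lemma PSpiles_intervalWord (ms : List ℕ) (hm : ∀ m ∈ ms, 0 < m) :
    PSpiles (intervalWord 1 ms) = intervalPiles 1 ms := by
  have := fold_word ms 1 [] (by simp) hm
  simpa [PSpiles] using this

lemma intervalWord_noPat : ∀ (ms : List ℕ) (a : ℕ), ¬ Pat312 (intervalWord a ms) := by
  intro ms
  induction ms with
  | nil => intro a ⟨x, y, z, _, _, h⟩; simp [intervalWord] at h
  | cons m ms ih =>
    intro a ⟨x, y, z, hyz, hzx, h⟩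
    rw [intervalWord] at h
    rcases List.sublist_append_iff.1 h with ⟨l₁, l₂, hl, hs₁, hs₂⟩
    have hrun : ∀ u ∈ l₁, a ≤ u ∧ u < a + m := by
      intro u hu
      have := hs₁.subset hu
      rw [List.mem_reverse, List.mem_range'_1] at this
      exact this
    have hrest : ∀ u ∈ l₂, a + m ≤ u := by
      intro u hu
      exact ((intervalWord_mem ms (a + m) u).1 (hs₂.subset hu)).1
    match l₁, hl with
    | [], hl =>
      simp at hl
      subst hl
      exact ih (a + m) ⟨x, y, z, hyz, hzx, hs₂⟩
    | [u], hl =>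
      obtain ⟨rfl, hl2⟩ : x = u ∧ [y, z] = l₂ := by simpa using hl
      have hy : y ∈ l₂ := by rw [← hl2]; simp
      have h1 := hrest y hy
      have h2 := (hrun x (by simp)).2
      omega
    | [u, v], hl =>
      obtain ⟨rfl, rfl, hl2⟩ : x = u ∧ y = v ∧ [z] = l₂ := by simpa using hl
      have hz : z ∈ l₂ := by rw [← hl2]; simp
      have h1 := hrest z hz
      have h2 := (hrun x (by simp)).2
      omega
    | [u, v, w'], hl =>
      obtain ⟨rfl, rfl, rfl, -⟩ : x = u ∧ y = v ∧ z = w' ∧ l₂ = [] := by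
        have := hl
        simp at this
        tauto
      have hpw : (List.range' a m).reverse.Pairwise (· > ·) := by
        rw [List.pairwise_reverse]
        simpa using (List.pairwise_lt_range' (s := a) (n := m) 1 (by omega))
      have := hpw.sublist hs₁
      rcases List.pairwise_cons.1 this with ⟨hx, hrest'⟩
      have := (List.pairwise_cons.1 hrest').1 z (by simp)
      omega
    | u :: v :: w' :: t :: l, hl =>
      simp at hl

lemma reconstruct : ∀ (R : List (List ℕ)) (a N : ℕ),
    (∀ p ∈ R, p ≠ []) →
    (∀ p ∈ R, p.Pairwise (· < ·)) →
    (R.map List.headI).Chain' (· < ·) →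
    R.Pairwise List.Disjoint →
    (∀ p ∈ R, ∃ u v : ℕ, p.toFinset = Finset.Icc u v) →
    (∀ x, (∃ p ∈ R, x ∈ p) ↔ a ≤ x ∧ x ≤ N) →
    R = intervalPiles a (R.map List.length) := by
  intro R
  induction R with
  | nil => intro a N _ _ _ _ _ _; simp [intervalPiles]
  | cons p R ih =>
    intro a N hne hsort hheads hdisj hicc hun
    have hpne : p ≠ [] := hne p (by simp)
    have hpsort := hsort p (by simp)
    obtain ⟨u, v, huv⟩ := hicc p (by simp)
    have hmemp : ∀ x, x ∈ p ↔ u ≤ x ∧ x ≤ v := by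
      intro x
      rw [← List.mem_toFinset, huv, Finset.mem_Icc]
    have huv' : u ≤ v := by
      match p, hpne with
      | x :: t, _ =>
        have := (hmemp x).1 (by simp)
        omega
    have hup : u ∈ p := (hmemp u).2 ⟨le_refl u, huv'⟩
    have hau : a ≤ u ∧ u ≤ N := hun u |>.1 ⟨p, by simp, hup⟩
    have hua : u = a := by
      rcases Nat.lt_or_ge a N.succ with _ | _
      · by_contra hne'
        have hau2 : a < u := lt_of_le_of_ne hau.1 (Ne.symm hne')
        have haN : a ≤ N := le_trans hau.1 hau.2
        obtain ⟨q, hq, haq⟩ := (hun a).2 ⟨le_refl a, haN⟩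
        rcases List.mem_cons.1 hq with rfl | hq'
        · have := (hmemp a).1 haq
          omega
        · -- q in the tail; its head exceeds headI p = u > a, contradiction
          have hqa : q.headI ≤ a := headI_le (hsort q (by simp [hq'])) haq
          have hpu : p.headI = u := by
            have h1 : p.headI ≤ u := headI_le hpsort hup
            have h2 := (hmemp p.headI).1 (headI_mem hpne)
            omega
          have hpair : List.Pairwise (· < ·) ((p :: R).map List.headI) :=
            List.isChain_iff_pairwise.1 hheads
          rw [List.map_cons] at hpair
          have := (List.pairwise_cons.1 hpair).1 q.headI (List.mem_map.2 ⟨q, hq', rfl⟩)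
          omega
      · omega
    subst hua
    -- p is the interval list
    have hplen : p.length = v + 1 - u := by
      have h1 : p.toFinset.card = p.length :=
        List.toFinset_card_of_nodup (hpsort.imp fun h => ne_of_lt h)
      rw [huv] at h1
      simpa [Nat.card_Icc] using h1.symm
    have hpeq : p = List.range' u p.length := by
      refine List.Perm.eq_of_pairwise'
        (hpsort.imp fun h => le_of_lt h)
        ((List.pairwise_lt_range' (s := u) (n := p.length) 1 (by omega)).imp fun h => le_of_lt h)
        (List.perm_of_nodup_nodup_toFinset_eq
          (hpsort.imp fun h => ne_of_lt h)
          ((List.pairwise_lt_range' (s := u) (n := p.length) 1 (by omega)).imp fun h => ne_of_lt h) ?_)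
      ext x
      rw [huv, List.mem_toFinset, List.mem_range'_1, Finset.mem_Icc, hplen]
      omega
    have hRrest : R = intervalPiles (v + 1) (R.map List.length) := by
      refine ih (v + 1) N (fun q hq => hne q (by simp [hq]))
        (fun q hq => hsort q (by simp [hq])) ?_
        (List.pairwise_cons.1 hdisj).2
        (fun q hq => hicc q (by simp [hq])) ?_
      · have := hheads
        rw [List.map_cons] at this
        exact (List.isChain_cons.1 this).2
      · intro x
        constructor
        · rintro ⟨q, hq, hxq⟩
          have hx1 := (hun x).1 ⟨q, by simp [hq], hxq⟩
          have hxp : x ∉ p := fun hxp =>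
            (List.pairwise_cons.1 hdisj).1 q hq hxp hxq
          rw [hmemp] at hxp
          push_neg at hxp
          refine ⟨?_, hx1.2⟩
          rcases Nat.lt_or_ge x (v + 1) with h' | h'
          · exact absurd (hxp hx1.1) (by omega)
          · exact h'
        · rintro ⟨h1, h2⟩
          obtain ⟨q, hq, hxq⟩ := (hun x).2 ⟨by omega, h2⟩
          rcases List.mem_cons.1 hq with rfl | hq'
          · rw [hmemp] at hxq; omega
          · exact ⟨q, hq', hxq⟩
    rw [List.map_cons, intervalPiles]
    rw [← hpeq, hplen]
    have : u + (v + 1 - u) = v + 1 := by omega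
    rw [this, ← hRrest]

lemma permWord_length {n : ℕ} (σ : Equiv.Perm (Fin n)) : (permWord σ).length = n := by
  simp [permWord]

lemma permWord_nodup {n : ℕ} (σ : Equiv.Perm (Fin n)) : (permWord σ).Nodup := by
  rw [permWord, List.nodup_ofFn]
  intro i j h
  simp only at h
  have : (σ i : ℕ) = σ j := by omega
  exact σ.injective (Fin.ext this)

lemma mem_permWord {n : ℕ} (σ : Equiv.Perm (Fin n)) {x : ℕ} :
    x ∈ permWord σ ↔ 1 ≤ x ∧ x ≤ n := by
  rw [permWord, List.mem_ofFn]
  constructor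
  · rintro ⟨i, rfl⟩
    have := (σ i).isLt
    show 1 ≤ (σ i : ℕ) + 1 ∧ (σ i : ℕ) + 1 ≤ n
    omega
  · rintro ⟨h1, h2⟩
    refine ⟨σ.symm ⟨x - 1, by omega⟩, ?_⟩
    show (σ (σ.symm ⟨x - 1, by omega⟩) : ℕ) + 1 = x
    rw [Equiv.apply_symm_apply]
    simp
    omega

lemma pat312_iff_idx (l : List ℕ) :
    Pat312 l ↔ ∃ i j k : Fin l.length, i < j ∧ j < k ∧
      l.get j < l.get k ∧ l.get k < l.get i := by
  constructor
  · rintro ⟨a, b, c, h1, h2, hs⟩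
    obtain ⟨is, his, hpw⟩ := List.sublist_eq_map_getElem hs
    match is, his, hpw with
    | [i, j, k], his, hpw =>
      obtain ⟨ha, hb, hc⟩ : a = l.get i ∧ b = l.get j ∧ c = l.get k := by
        simpa using his
      refine ⟨i, j, k, ?_, ?_, ?_, ?_⟩
      · exact (List.pairwise_cons.1 hpw).1 j (by simp)
      · exact (List.pairwise_cons.1 (List.pairwise_cons.1 hpw).2).1 k (by simp)
      · omega
      · omega
    | [], his, _ => simp at his
    | [i], his, _ => simp at his
    | [i, j], his, _ => simp at his
    | i :: j :: k :: m :: t, his, _ =>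
      have := congrArg List.length his
      simp at this
  · rintro ⟨i, j, k, hij, hjk, h1, h2⟩
    refine ⟨l.get i, l.get j, l.get k, h1, h2, ?_⟩
    have : [l.get i, l.get j, l.get k] = [i, j, k].map l.get := by simp
    rw [this]
    refine List.map_getElem_sublist ?_
    refine List.pairwise_cons.2 ⟨?_, List.pairwise_cons.2 ⟨?_, by simp⟩⟩
    · intro y hy
      rcases List.mem_cons.1 hy with rfl | hy
      · exact hij
      · simp at hy
        subst hy
        exact hij.trans hjk
    · intro y hy
      simp at hy
      subst hy
      exact hjk

lemma intervalWord_nodup : ∀ (ms : List ℕ) (a : ℕ), (intervalWord a ms).Nodup := by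
  intro ms
  induction ms with
  | nil => intro a; simp [intervalWord]
  | cons m ms ih =>
    intro a
    rw [intervalWord]
    refine List.Nodup.append ?_ (ih (a + m)) ?_
    · exact List.nodup_reverse.2 ((List.pairwise_lt_range' (s := a) (n := m) 1 (by omega)).imp
        fun h => ne_of_lt h)
    · intro x hx hx'
      rw [List.mem_reverse, List.mem_range'_1] at hx
      have := ((intervalWord_mem ms (a + m) x).1 hx').1
      omega

lemma intervalPiles_icc : ∀ (ms : List ℕ) (a : ℕ), (∀ m ∈ ms, 0 < m) →
    ∀ p ∈ intervalPiles a ms, ∃ u v : ℕ, p.toFinset = Finset.Icc u v := by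
  intro ms
  induction ms with
  | nil => intro a _ p hp; simp [intervalPiles] at hp
  | cons m ms ih =>
    intro a hpos p hp
    rw [intervalPiles] at hp
    rcases List.mem_cons.1 hp with rfl | hp'
    · refine ⟨a, a + m - 1, ?_⟩
      ext x
      rw [List.mem_toFinset, List.mem_range'_1, Finset.mem_Icc]
      have := hpos m (by simp)
      omega
    · exact ih (a + m) (fun r hr => hpos r (by simp [hr])) p hp'

lemma exists_perm_of_word {n : ℕ} (l : List ℕ) (hlen : l.length = n) (hnd : l.Nodup)
    (hmem : ∀ x ∈ l, 1 ≤ x ∧ x ≤ n) (hnp : ¬ Pat312 l) :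
    ∃ σ : Equiv.Perm (Fin n),
      (∀ i j k : Fin n, i < j → j < k → ¬(σ j < σ k ∧ σ k < σ i)) ∧ permWord σ = l := by
  have hget : ∀ i : Fin l.length, 1 ≤ l.get i ∧ l.get i ≤ n :=
    fun i => hmem (l.get i) (l.get_mem i)
  have hf : ∀ i : Fin n, l.get (Fin.cast hlen.symm i) - 1 < n := by
    intro i
    have := hget (Fin.cast hlen.symm i)
    omega
  set f : Fin n → Fin n := fun i => ⟨l.get (Fin.cast hlen.symm i) - 1, hf i⟩ with hfdef
  have hinj : Function.Injective f := by
    intro i j h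
    have hv : l.get (Fin.cast hlen.symm i) - 1 = l.get (Fin.cast hlen.symm j) - 1 :=
      congrArg Fin.val h
    have h1 := hget (Fin.cast hlen.symm i)
    have h2 := hget (Fin.cast hlen.symm j)
    have : l.get (Fin.cast hlen.symm i) = l.get (Fin.cast hlen.symm j) := by omega
    have := (List.Nodup.get_inj_iff hnd).1 this
    exact Fin.ext (by simpa using congrArg Fin.val this)
  refine ⟨Equiv.ofBijective f (Finite.injective_iff_bijective.1 hinj), ?_, ?_⟩
  · intro i j k hij hjk ⟨h1, h2⟩
    apply hnp
    rw [pat312_iff_idx]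
    refine ⟨Fin.cast hlen.symm i, Fin.cast hlen.symm j, Fin.cast hlen.symm k,
      ?_, ?_, ?_, ?_⟩
    · exact hij
    · exact hjk
    · have hv1 : (f j : ℕ) < f k := h1
      have := hget (Fin.cast hlen.symm j)
      have := hget (Fin.cast hlen.symm k)
      simp only [hfdef] at hv1
      omega
    · have hv2 : (f k : ℕ) < f i := h2
      have := hget (Fin.cast hlen.symm k)
      have := hget (Fin.cast hlen.symm i)
      simp only [hfdef] at hv2
      omega
  · rw [permWord]
    apply List.ext_get (by simp [hlen])
    intro i h1 h2
    rw [List.get_ofFn]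
    show (f _ : ℕ) + 1 = _
    simp only [hfdef]
    have := hget ⟨i, h2⟩
    have he : l.get (Fin.cast hlen.symm (Fin.cast (by simp) ⟨i, h1⟩)) = l.get ⟨i, h2⟩ := by
      congr 1
    omega

lemma noPat_of_avoid {n : ℕ} (σ : Equiv.Perm (Fin n))
    (hav : ∀ i j k : Fin n, i < j → j < k → ¬(σ j < σ k ∧ σ k < σ i)) :
    ¬ Pat312 (permWord σ) := by
  intro hp
  rw [pat312_iff_idx] at hp
  obtain ⟨i, j, k, hij, hjk, h1, h2⟩ := hp
  have key : ∀ i : Fin (permWord σ).length,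
      (permWord σ).get i = (σ (Fin.cast (permWord_length σ) i) : ℕ) + 1 := by
    intro i
    simp only [permWord]
    exact List.get_ofFn _ _
  rw [key j, key k] at h1
  rw [key k, key i] at h2
  refine hav (Fin.cast (permWord_length σ) i) (Fin.cast (permWord_length σ) j)
    (Fin.cast (permWord_length σ) k) ?_ ?_ ⟨?_, ?_⟩
  · exact hij
  · exact hjk
  · rw [Fin.lt_def]; omega
  · rw [Fin.lt_def]; omega

lemma piles_Icc {n : ℕ} {σ : Equiv.Perm (Fin n)} (hnp : ¬ Pat312 (permWord σ)) :
    ∀ p ∈ PSpiles (permWord σ), ∃ a b : ℕ, p.toFinset = Finset.Icc a b := by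
  have hI := inv_psPiles _ (permWord_nodup σ)
  intro p hp
  have hpne := hI.ne p hp
  have hfne : p.toFinset.Nonempty := by
    match p, hpne with
    | x :: t, _ => exact ⟨x, by simp⟩
  refine ⟨p.toFinset.min' hfne, p.toFinset.max' hfne, ?_⟩
  ext y
  simp only [Finset.mem_Icc]
  constructor
  · intro hy
    exact ⟨Finset.min'_le _ y hy, Finset.le_max' _ y (List.mem_toFinset.2
      (List.mem_toFinset.1 hy))⟩
  · rintro ⟨h1, h2⟩
    have hmin : p.toFinset.min' hfne ∈ p := List.mem_toFinset.1 (Finset.min'_mem _ _)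
    have hmax : p.toFinset.max' hfne ∈ p := List.mem_toFinset.1 (Finset.max'_mem _ _)
    rcases eq_or_lt_of_le h1 with h1' | h1'
    · exact List.mem_toFinset.2 (h1' ▸ hmin)
    · rcases eq_or_lt_of_le h2 with h2' | h2'
      · exact List.mem_toFinset.2 (h2' ▸ hmax)
      · have hminw := (inv_mem_w hI).2 ⟨p, hp, hmin⟩
        have hmaxw := (inv_mem_w hI).2 ⟨p, hp, hmax⟩
        rw [mem_permWord] at hminw hmaxw
        have hyw : y ∈ permWord σ := (mem_permWord σ).2 ⟨by omega, by omega⟩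
        exact List.mem_toFinset.2
          (hI.intv hnp p hp _ hmin _ hmax y hyw h1' h2')

lemma S_eq {n : ℕ} {R : List (List ℕ)} (σ : Equiv.Perm (Fin n))
    (hR : PSpiles (permWord σ) = R)
    (hicc : ∀ p ∈ R, ∃ a b : ℕ, p.toFinset = Finset.Icc a b) :
    ∃ ms : List ℕ, (∀ m ∈ ms, 0 < m) ∧ ms.sum = n ∧ R = intervalPiles 1 ms := by
  subst hR
  have hI := inv_psPiles _ (permWord_nodup σ)
  have hflat : (PSpiles (permWord σ)).flatten.Nodup :=
    (hI.perm.nodup_iff).2 (permWord_nodup σ)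
  have hdisj := (List.nodup_flatten.1 hflat).2
  have hun : ∀ x, (∃ p ∈ PSpiles (permWord σ), x ∈ p) ↔ 1 ≤ x ∧ x ≤ n := by
    intro x
    rw [← inv_mem_w hI, mem_permWord]
  have hrec := reconstruct (PSpiles (permWord σ)) 1 n hI.ne hI.sorted hI.heads
    hdisj hicc hun
  refine ⟨(PSpiles (permWord σ)).map List.length, ?_, ?_, hrec⟩
  · intro m hm
    rcases List.mem_map.1 hm with ⟨p, hp, rfl⟩
    have := hI.ne p hp
    match p, this with
    | x :: t, _ => simp
  · have h1 : ((PSpiles (permWord σ)).map List.length).sum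
        = (PSpiles (permWord σ)).flatten.length := List.length_flatten.symm
    rw [h1, hI.perm.length_eq, permWord_length]

lemma intervalPiles_real {n : ℕ} (ms : List ℕ) (hpos : ∀ m ∈ ms, 0 < m)
    (hsum : ms.sum = n) :
    ∃ σ : Equiv.Perm (Fin n),
      (∀ i j k : Fin n, i < j → j < k → ¬(σ j < σ k ∧ σ k < σ i)) ∧
      PSpiles (permWord σ) = intervalPiles 1 ms := by
  obtain ⟨σ, hav, hw⟩ := exists_perm_of_word (intervalWord 1 ms)
    (by rw [intervalWord_length, hsum]) (intervalWord_nodup ms 1)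
    (fun x hx => by have := (intervalWord_mem ms 1 x).1 hx; omega)
    (intervalWord_noPat ms 1)
  exact ⟨σ, hav, by rw [hw, PSpiles_intervalWord ms hpos]⟩

/-- The image under Patience Sorting of the permutations of `{1,…,n}`
avoiding the classical pattern 3-1-2 (no `i < j < k` with `σ(j) < σ(k) < σ(i)`) is
exactly the set of non-crossing pile configurations, i.e., pile configurations (sequences
of piles arising from some permutation) each of whose piles is an interval of consecutive
integers; in particular there are exactly `2 ^ (n - 1)` such pile configurations. -/
theorem stmt18 (n : ℕ) :
    {R : List (List ℕ) | ∃ σ : Equiv.Perm (Fin n),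
        (∀ i j k : Fin n, i < j → j < k → ¬(σ j < σ k ∧ σ k < σ i)) ∧
        PSpiles (permWord σ) = R}
      = {R | (∃ σ : Equiv.Perm (Fin n), PSpiles (permWord σ) = R) ∧
             ∀ p ∈ R, ∃ a b : ℕ, p.toFinset = Finset.Icc a b} ∧
    Nat.card {R : List (List ℕ) //
        (∃ σ : Equiv.Perm (Fin n), PSpiles (permWord σ) = R) ∧
        ∀ p ∈ R, ∃ a b : ℕ, p.toFinset = Finset.Icc a b} = 2 ^ (n - 1) := by
  constructor
  · ext R
    simp only [Set.mem_setOf_eq]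
    constructor
    · rintro ⟨σ, hav, rfl⟩
      exact ⟨⟨σ, rfl⟩, piles_Icc (noPat_of_avoid σ hav)⟩
    · rintro ⟨⟨σ, hR⟩, hicc⟩
      obtain ⟨ms, hpos, hsum, hRe⟩ := S_eq σ hR hicc
      obtain ⟨τ, hav, hτ⟩ := intervalPiles_real ms hpos hsum
      exact ⟨τ, hav, by rw [hτ, ← hRe]⟩
  · set S := {R : List (List ℕ) //
        (∃ σ : Equiv.Perm (Fin n), PSpiles (permWord σ) = R) ∧
        ∀ p ∈ R, ∃ a b : ℕ, p.toFinset = Finset.Icc a b} with hS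
    let g : Composition n → S := fun c =>
      ⟨intervalPiles 1 c.blocks,
        ⟨(intervalPiles_real c.blocks (fun m hm => c.blocks_pos hm) c.blocks_sum).choose,
          (intervalPiles_real c.blocks (fun m hm => c.blocks_pos hm)
            c.blocks_sum).choose_spec.2⟩,
        intervalPiles_icc c.blocks 1 (fun m hm => c.blocks_pos hm)⟩
    have hgi : Function.Injective g := by
      intro c c' h
      have hval : intervalPiles 1 c.blocks = intervalPiles 1 c'.blocks :=
        congrArg Subtype.val h
      have hb : c.blocks = c'.blocks := by
        have h1 := intervalPiles_map_length c.blocks 1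
        have h2 := intervalPiles_map_length c'.blocks 1
        rw [← h1, ← h2, hval]
      cases c; cases c'
      simpa using hb
    have hgs : Function.Surjective g := by
      rintro ⟨R, ⟨σ, hR⟩, hicc⟩
      obtain ⟨ms, hpos, hsum, hRe⟩ := S_eq σ hR hicc
      exact ⟨⟨ms, fun {i} hi => hpos i hi, hsum⟩, Subtype.ext hRe.symm⟩
    calc Nat.card S = Nat.card (Composition n) :=
          (Nat.card_congr (Equiv.ofBijective g ⟨hgi, hgs⟩)).symm
      _ = 2 ^ (n - 1) := by rw [Nat.card_eq_fintype_card, composition_card]
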